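/- For n ≥ 1, ∑_{k=0}^{n−1} 𝔽_k/(k+1) = (s(n+1,2)/n!)·𝔽_n − ∑_{k=0}^{n−1} s(k+2,2)/((k+1)!·F_{k+1}), where s(a,b) denotes the unsigned Stirling numbers of the first kind. -/

import Mathlib

open Finset

noncomputable def harmFib (n : ℕ) : ℝ := ∑ k ∈ Finset.Icc 1 n, (1 : ℝ) / Nat.fib k

def stirling1 : ℕ → ℕ → ℕ
  | 0, 0 => 1
  | 0, _ + 1 => 0
  | _ + 1, 0 => 0
  | n + 1, k + 1 => n * stirling1 n (k + 1) + stirling1 n k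

noncomputable def Hh (n : ℕ) : ℝ := ∑ k ∈ Finset.Icc 1 n, (1 : ℝ) / k

lemma s1_one (n : ℕ) : stirling1 (n + 1) 1 = Nat.factorial n := by
  induction n with
  | zero => rfl
  | succ m ih =>
    show (m+1) * stirling1 (m+1) 1 + stirling1 (m+1) 0 = _
    rw [ih]
    show (m+1) * Nat.factorial m + 0 = _
    simp [Nat.factorial_succ]

lemma Hh_succ (n : ℕ) : Hh (n + 1) = Hh n + 1 / (n + 1) := by
  unfold Hh
  rw [Finset.sum_Icc_succ_top (by omega)]
  push_cast; ring

lemma harmFib_succ (n : ℕ) : harmFib (n + 1) = harmFib n + 1 / Nat.fib (n + 1) := by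
  unfold harmFib
  rw [Finset.sum_Icc_succ_top (by omega)]

lemma s1_two (n : ℕ) : (stirling1 (n + 1) 2 : ℝ) = Nat.factorial n * Hh n := by
  induction n with
  | zero => simp [stirling1, Hh]
  | succ m ih =>
    show ((m+1) * stirling1 (m+1) 2 + stirling1 (m+1) 1 : ℕ) = (Nat.factorial (m+1) : ℝ) * Hh (m+1)
    push_cast [s1_one, ih, Hh_succ, Nat.factorial_succ]
    have : ((m+1 : ℕ) : ℝ) ≠ 0 := by positivity
    field_simp

lemma key (n : ℕ) :
    ∑ k ∈ Finset.range n, harmFib k / (k + 1) =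
      Hh n * harmFib n - ∑ k ∈ Finset.range n, Hh (k + 1) / Nat.fib (k + 1) := by
  induction n with
  | zero => simp [Hh, harmFib]
  | succ m ih =>
    rw [Finset.sum_range_succ, Finset.sum_range_succ, ih, Hh_succ, harmFib_succ]
    ring

theorem stmt_16 (n : ℕ) (hn : 1 ≤ n) :
    ∑ k ∈ Finset.range n, harmFib k / (k + 1) =
      ((stirling1 (n + 1) 2 : ℝ) / Nat.factorial n) * harmFib n -
        ∑ k ∈ Finset.range n,
          (stirling1 (k + 2) 2 : ℝ) / ((Nat.factorial (k + 1)) * Nat.fib (k + 1)) := by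
  have hfac : ∀ m : ℕ, ((Nat.factorial m : ℕ) : ℝ) ≠ 0 := fun m => by
    exact_mod_cast Nat.factorial_ne_zero m
  rw [key]
  congr 1
  · rw [s1_two]
    field_simp
  · apply Finset.sum_congr rfl
    intro k _
    have hfib : ((Nat.fib (k+1) : ℕ) : ℝ) ≠ 0 := by
      exact_mod_cast (Nat.fib_pos.mpr (by omega)).ne'
    rw [show k + 2 = (k + 1) + 1 from rfl, s1_two]
    field_simp
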